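/- Let Γ be a (d−1)-dimensional simplicial complex with Boolean decomposition Γ = {F ∪ G : F ∈ S, G ⊆ [d−2|F|]}, and let u be a vertex of S such that u ∉ [d]. Then Ast_Γ(u) = {F ∪ G : F ∈ Ast_S(u), G ⊆ [d−2|F|]}; that is, the antistar of u in Γ has a Boolean decomposition with initial part Ast_S(u). -/
import Mathlib


open Polynomial Finset

variable {V : Type*} [DecidableEq V]

/-- A (finite, abstract) simplicial complex: contains the empty face and is
closed under taking subsets. -/
def IsSimpComplex (K : Finset (Finset V)) : Prop :=
  ∅ ∈ K ∧ ∀ A ∈ K, ∀ B ⊆ A, B ∈ K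

/-- The link of a face `F`: all faces `A` with `A ∪ F ∈ K` and `A ∩ F = ∅`. -/
def lk (K : Finset (Finset V)) (F : Finset V) : Finset (Finset V) :=
  K.filter fun A => A ∪ F ∈ K ∧ Disjoint A F

/-- The face polynomial `f_K(t) = ∑_{A ∈ K} t^{|A|}` (the empty face contributes 1). -/
noncomputable def fpoly (K : Finset (Finset V)) : Polynomial ℤ :=
  ∑ A ∈ K, Polynomial.X ^ A.card

/-- `∑_{A ∈ K} (t-1)^{d-|A|} = ∑_i f_{i-1}(K) (t-1)^{d-i} = ∑_k h_k(K) t^{d-k}`,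
the (descending form of the) h-polynomial of a `(d-1)`-dimensional complex. -/
noncomputable def hpoly (d : ℕ) (K : Finset (Finset V)) : Polynomial ℤ :=
  ∑ A ∈ K, (Polynomial.X - 1) ^ (d - A.card)

/-- `faceCount K i = f_{i-1}(K)`, the number of faces of cardinality `i`. -/
def faceCount (K : Finset (Finset V)) (i : ℕ) : ℕ :=
  (K.filter fun A => A.card = i).card

/-- The antistar of a vertex `u`: faces not containing `u`. -/
def ast (K : Finset (Finset V)) (u : V) : Finset (Finset V) :=
  K.filter fun A => u ∉ A

/-- Boolean decomposition, see `stmt7`. -/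
def HasBooleanDecomp (d : ℕ) (Γ S : Finset (Finset ℕ)) : Prop :=
  S = Γ.filter (fun F => Disjoint F (Finset.Icc 1 d)) ∧
  ∀ A : Finset ℕ, A ∈ Γ ↔ ∃ F ∈ S, ∃ G ⊆ Finset.Icc 1 (d - 2 * F.card), A = F ∪ G

/-- if `Γ` has a Boolean decomposition with initial part `S` and `u` is a
vertex of `S` with `u ∉ [d]`, then `Ast_Γ(u) = {F ∪ G : F ∈ Ast_S(u), G ⊆ [d−2|F|]}`,
i.e. the antistar has a Boolean decomposition with initial part `Ast_S(u)`. -/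
theorem stmt9 (d : ℕ) (Γ S : Finset (Finset ℕ)) (u : ℕ)
    (hΓ : HasBooleanDecomp d Γ S) (hu : ({u} : Finset ℕ) ∈ S)
    (hud : u ∉ Finset.Icc 1 d) :
    HasBooleanDecomp d (ast Γ u) (ast S u) := by
  obtain ⟨hS, hdec⟩ := hΓ
  constructor
  · ext A
    simp only [ast, hS, Finset.mem_filter]
    tauto
  · intro A
    constructor
    · intro hA
      simp only [ast, Finset.mem_filter] at hA
      obtain ⟨hAΓ, huA⟩ := hA
      obtain ⟨F, hF, G, hG, rfl⟩ := (hdec _).1 hAΓ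
      refine ⟨F, ?_, G, hG, rfl⟩
      simp only [ast, Finset.mem_filter]
      exact ⟨hF, fun h => huA (Finset.mem_union_left _ h)⟩
    · rintro ⟨F, hF, G, hG, rfl⟩
      simp only [ast, Finset.mem_filter] at hF ⊢
      refine ⟨(hdec _).2 ⟨F, hF.1, G, hG, rfl⟩, ?_⟩
      intro h
      rcases Finset.mem_union.1 h with h | h
      · exact hF.2 h
      · exact hud (Finset.Icc_subset_Icc_right (Nat.sub_le _ _) (hG h))
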